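/- Fix an infinite cardinal λ and a family (A_i)_{i<λ} of special subtrees of λ^{<ω} that are pairwise non-back-and-forth-equivalent. For u ⊆ λ, let T_u be the tree of height 1 with a root, one distinguished leaf a, and a node s_i for each i ∈ u, all immediate successors of the root; and let S_u be the rooted tree obtained from T_u by attaching, for each i ∈ u, a disjoint copy of A_i whose root is identified with s_i. A λ-colored tree on λ is a structure M = (λ^{<ω}, ⊴, (P_j^M)_{j<λ}) with each P_j^M ⊆ λ^{<ω}. For such M and η ∈ λ^{<ω}, let V_M(η) := {j < λ : η ∈ P_j^M}, and let f(M) := T₀*(S_{V_M(η)} : η ∈ T₀), where T₀ = λ^{<ω}. Then: (i) for every λ-colored tree M on λ, the partial order f(M) is isomorphic to a subtree of λ^{<ω}; and (ii) for all λ-colored trees M, N on λ: M ≡∞ℵ₀ N if and only if f(M) ≡∞ℵ₀ f(N) (as structures with the order alone). -/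

import Mathlib

noncomputable section

/-- a finite partial map (given by its graph `p`) between structures each with a
single binary relation is a partial isomorphism if it is functional, injective,
and preserves and reflects the relation. -/
def IsPartialIso {M N : Type*} (r : M → M → Prop) (s : N → N → Prop)
    (p : Finset (M × N)) : Prop :=
  (∀ x y y', (x, y) ∈ p → (x, y') ∈ p → y = y') ∧
  (∀ x x' y, (x, y) ∈ p → (x', y) ∈ p → x = x') ∧
  (∀ x y x' y', (x, y) ∈ p → (x', y') ∈ p → (r x x' ↔ s y y'))

/-- back-and-forth equivalence (`≡∞ℵ₀`) of two structures, each consisting of a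
single binary relation: a nonempty family of finite partial isomorphisms with the
back-and-forth extension property. -/
def BackForth {M N : Type*} (r : M → M → Prop) (s : N → N → Prop) : Prop :=
  ∃ F : Set (Finset (M × N)), F.Nonempty ∧
    (∀ p ∈ F, IsPartialIso r s p) ∧
    ∀ p ∈ F, ∀ a : M, ∀ b : N,
      ∃ q ∈ F, p ⊆ q ∧ (∃ b', (a, b') ∈ q) ∧ (∃ a', (a', b) ∈ q)

/-- a subtree of `λ^{<ω}`: a nonempty set of finite sequences closed under
initial segments -/
def IsSubtree {lam : Type*} (T : Set (List lam)) : Prop :=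
  T.Nonempty ∧ ∀ l ∈ T, ∀ l', l' <+: l → l' ∈ T

/-- `η` is contained in a branch of `T`: some `ν ∈ λ^ω` extends `η` with all its
finite restrictions in `T`. -/
def InBranch {lam : Type*} (T : Set (List lam)) (η : List lam) : Prop :=
  ∃ ν : ℕ → lam, (∀ n : ℕ, (List.ofFn fun i : Fin n => ν i) ∈ T) ∧
    η = List.ofFn fun i : Fin η.length => ν i

/-- `T` is special: for every `η ∈ T` contained in a branch, every immediate
successor of `η` in `T` has a proper extension in `T`. -/
def IsSpecial {lam : Type*} (T : Set (List lam)) : Prop :=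
  ∀ η ∈ T, InBranch T η →
    ∀ ν ∈ T, η <+: ν → ν.length = η.length + 1 →
      ∃ ρ ∈ T, ν <+: ρ ∧ ν ≠ ρ

/-- back-and-forth equivalence of two colored trees on `λ^{<ω}` (with colors indexed
by `ι`): a nonempty family of finite partial maps, functional and injective, preserving
and reflecting the initial-segment relation and all the colors, with the back-and-forth
extension property. -/
def ColBackForth {lam ι : Type*} (P Q : ι → Set (List lam)) : Prop :=
  ∃ F : Set (Finset (List lam × List lam)), F.Nonempty ∧
    (∀ p ∈ F,
      (∀ x y y', (x, y) ∈ p → (x, y') ∈ p → y = y') ∧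
      (∀ x x' y, (x, y) ∈ p → (x', y) ∈ p → x = x') ∧
      (∀ x y x' y', (x, y) ∈ p → (x', y') ∈ p → (x <+: x' ↔ y <+: y')) ∧
      (∀ x y, (x, y) ∈ p → ∀ j : ι, x ∈ P j ↔ y ∈ Q j)) ∧
    ∀ p ∈ F, ∀ a b : List lam,
      ∃ q ∈ F, p ⊆ q ∧ (∃ b', (a, b') ∈ q) ∧ (∃ a', (a', b) ∈ q)

/-- `V_M(η) = {j < λ : η ∈ P_j}` -/
def colorSet {lam : Type*} (P : lam → Set (List lam)) (η : List lam) : Set lam :=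
  {j | η ∈ P j}

/-- the universe of the attached tree `f(M) = T₀*(S_{V(η)} : η ∈ T₀)`, `T₀ = λ^{<ω}`,
where for `u ⊆ λ` the rooted tree `S_u` has, besides its root: a distinguished leaf
(encoded `Sum.inl ()`), and for each `i ∈ u` a copy of the special subtree `A i`
whose root is identified with the node `s_i` (its nodes encoded as pairs `(i, s)`
with `s ∈ A i`). So an element is either a node `η ∈ T₀`, or a pair `(η, z)` where
`z` is a non-root node of the copy of `S_{V(η)}` attached at `η`. -/
def AttachCar (lam : Type*) (A : lam → Set (List lam)) (V : List lam → Set lam) :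
    Type _ :=
  {x : List lam ⊕ (List lam × (Unit ⊕ lam × List lam)) //
    ∀ η i s, x = Sum.inr (η, Sum.inr (i, s)) → i ∈ V η ∧ s ∈ A i}

/-- the order of the attached tree: on `T₀` it is the initial segment relation;
a node of `T₀` is below a non-root node of `S_{V(ν)}` iff it is `⊴ ν`; within an
attached part the leaf `a` is comparable only with itself, and `(i, s) ≤ (j, t)`
iff `i = j` and `s ⊴ t` (inside the copy of `A i`). -/
def AttachLe {lam : Type*} (x y : List lam ⊕ (List lam × (Unit ⊕ lam × List lam))) :
    Prop :=
  (∃ η ν, x = Sum.inl η ∧ y = Sum.inl ν ∧ η <+: ν) ∨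
  (∃ η ν z, x = Sum.inl η ∧ y = Sum.inr (ν, z) ∧ η <+: ν) ∨
  (∃ η, x = Sum.inr (η, Sum.inl ()) ∧ y = Sum.inr (η, Sum.inl ())) ∨
  (∃ η i s t, x = Sum.inr (η, Sum.inr (i, s)) ∧ y = Sum.inr (η, Sum.inr (i, t)) ∧
    s <+: t)

set_option linter.unusedSectionVars false

namespace ColProof

open List Sum

variable {lam : Type}

abbrev Node (lam : Type) := List lam ⊕ (List lam × (Unit ⊕ lam × List lam))

lemma le_inl_inl {η ν : List lam} : AttachLe (inl η : Node lam) (inl ν) ↔ η <+: ν := by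
  constructor
  · rintro (⟨a, b, h1, h2, h3⟩ | ⟨a, b, z, h1, h2, h3⟩ | ⟨a, h1, h2⟩ | ⟨a, i, s, t, h1, h2, h3⟩) <;>
      simp_all
  · intro h; exact Or.inl ⟨η, ν, rfl, rfl, h⟩

lemma le_inl_inr {η ν : List lam} {z : Unit ⊕ lam × List lam} :
    AttachLe (inl η : Node lam) (inr (ν, z)) ↔ η <+: ν := by
  constructor
  · rintro (⟨a, b, h1, h2, h3⟩ | ⟨a, b, z', h1, h2, h3⟩ | ⟨a, h1, h2⟩ | ⟨a, i, s, t, h1, h2, h3⟩) <;>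
      simp_all
  · intro h; exact Or.inr (Or.inl ⟨η, ν, z, rfl, rfl, h⟩)

lemma le_leaf {η : List lam} {u : Unit} {y : Node lam} :
    AttachLe (inr (η, inl u)) y ↔ y = inr (η, inl ()) := by
  constructor
  · rintro (⟨a, b, h1, h2, h3⟩ | ⟨a, b, z', h1, h2, h3⟩ | ⟨a, h1, h2⟩ | ⟨a, i, s, t, h1, h2, h3⟩) <;>
      simp_all
  · rintro rfl; cases u; exact Or.inr (Or.inr (Or.inl ⟨η, rfl, rfl⟩))

lemma le_node {η : List lam} {i : lam} {s : List lam} {y : Node lam} :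
    AttachLe (inr (η, inr (i, s))) y ↔ ∃ t, y = inr (η, inr (i, t)) ∧ s <+: t := by
  constructor
  · rintro (⟨a, b, h1, h2, h3⟩ | ⟨a, b, z', h1, h2, h3⟩ | ⟨a, h1, h2⟩ | ⟨a, j, s', t, h1, h2, h3⟩) <;>
      simp_all
  · rintro ⟨t, rfl, h⟩; exact Or.inr (Or.inr (Or.inr ⟨η, i, s, t, rfl, rfl, h⟩))

lemma not_le_inr_inl {z : List lam × (Unit ⊕ lam × List lam)} {η : List lam} :
    ¬ AttachLe (inr z : Node lam) (inl η) := by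
  rintro (⟨a, b, h1, h2, h3⟩ | ⟨a, b, z', h1, h2, h3⟩ | ⟨a, h1, h2⟩ | ⟨a, j, s', t, h1, h2, h3⟩) <;>
    simp_all

lemma le_node_node {η ν : List lam} {i j : lam} {s t : List lam} :
    AttachLe (inr (η, inr (i, s)) : Node lam) (inr (ν, inr (j, t))) ↔
      η = ν ∧ i = j ∧ s <+: t := by
  rw [le_node]
  constructor
  · rintro ⟨t', h, hp⟩; simp only [inr.injEq, Prod.mk.injEq] at h
    obtain ⟨rfl, rfl, rfl⟩ := h
    exact ⟨rfl, rfl, hp⟩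
  · rintro ⟨rfl, rfl, hp⟩; exact ⟨t, rfl, hp⟩

lemma attachLe_refl (x : Node lam) : AttachLe x x := by
  rcases x with η | ⟨η, u | ⟨i, s⟩⟩
  · exact le_inl_inl.2 prefix_rfl
  · cases u; exact le_leaf.2 rfl
  · exact le_node_node.2 ⟨rfl, rfl, prefix_rfl⟩

lemma attachLe_antisymm {x y : Node lam} (h1 : AttachLe x y) (h2 : AttachLe y x) : x = y := by
  rcases x with η | ⟨η, u | ⟨i, s⟩⟩ <;> rcases y with ν | ⟨ν, v | ⟨j, t⟩⟩
  · rw [le_inl_inl] at h1 h2; rw [h1.eq_of_length (h1.length_le.antisymm h2.length_le)]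
  · exact absurd h2 not_le_inr_inl
  · exact absurd h2 not_le_inr_inl
  · exact absurd h1 not_le_inr_inl
  · cases u; cases v; rw [le_leaf] at h1; exact h1.symm ▸ rfl
  · cases u; rw [le_leaf] at h1; simp at h1
  · exact absurd h1 not_le_inr_inl
  · cases v; rw [le_leaf] at h2; simp at h2
  · rw [le_node_node] at h1 h2
    obtain ⟨rfl, rfl, hp⟩ := h1; obtain ⟨-, -, hq⟩ := h2
    rw [hp.eq_of_length (hp.length_le.antisymm hq.length_le)]

end ColProof
namespace ColProof

open List Sum

variable {lam : Type}

section Encoding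

lemma exists_embed (lam : Type) [Infinite lam] :
    Nonempty ((lam ⊕ Unit ⊕ lam) ↪ lam) := by
  rw [← Cardinal.le_def]
  have h := Cardinal.aleph0_le_mk lam
  have h1 : (Cardinal.mk Unit : Cardinal) ≤ Cardinal.mk lam := by
    rw [Cardinal.le_def]
    exact ⟨⟨fun _ => Classical.arbitrary lam, fun a b _ => Subsingleton.elim a b⟩⟩
  calc Cardinal.mk (lam ⊕ Unit ⊕ lam)
      = Cardinal.mk lam + (Cardinal.mk Unit + Cardinal.mk lam) := by
        simp [Cardinal.mk_sum]
    _ ≤ Cardinal.mk lam + (Cardinal.mk lam + Cardinal.mk lam) := by gcongr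
    _ = Cardinal.mk lam := by rw [Cardinal.add_eq_self h, Cardinal.add_eq_self h]

variable [Infinite lam]

def J (lam : Type) [Infinite lam] : (lam ⊕ Unit ⊕ lam) ↪ lam :=
  (exists_embed lam).some

def m1 (lam : Type) [Infinite lam] : lam := J lam (inr (inl ()))

def m2 (i : lam) : lam := J lam (inr (inr i))

def enc0 (η : List lam) : List lam := η.map (fun a => J lam (inl a))

def enc : Node lam → List lam
  | inl η => enc0 η
  | inr (η, inl _) => enc0 η ++ [m1 lam]
  | inr (η, inr (i, s)) => enc0 η ++ m2 i :: s

lemma hm1 (a : lam) : m1 lam ≠ J lam (inl a) := by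
  intro h; have := (J lam).injective h; simp at this

lemma hm2 (i a : lam) : m2 i ≠ J lam (inl a) := by
  intro h; have := (J lam).injective h; simp at this

lemma hm12 (i : lam) : m1 lam ≠ m2 i := by
  intro h; have := (J lam).injective h; simp at this

lemma m2_inj {i j : lam} (h : m2 i = m2 j) : i = j := by
  have := (J lam).injective h; simpa using this

lemma enc0_inj : Function.Injective (enc0 : List lam → List lam) :=
  List.map_injective_iff.2 (fun a b h => by
    have := (J lam).injective h; simpa using this)

lemma LA {η ν : List lam} : enc0 η <+: enc0 ν ↔ η <+: ν := by
  constructor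
  · intro h
    have h2 := List.prefix_iff_eq_take.1 h
    rw [show (enc0 η).length = η.length from List.length_map _,
      show (enc0 ν).take η.length = enc0 (ν.take η.length) from List.map_take.symm] at h2
    rw [enc0_inj h2]
    exact List.take_prefix _ _
  · intro h; exact h.map _

lemma LB {c : lam} (hc : ∀ a, c ≠ J lam (inl a)) :
    ∀ (η ν r : List lam), enc0 η <+: enc0 ν ++ c :: r → η <+: ν := by
  intro η
  induction η with
  | nil => intro ν r _; exact nil_prefix
  | cons a η ih =>
    intro ν r h
    cases ν with
    | nil =>
      simp only [enc0, List.map_cons, List.map_nil, List.nil_append,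
        List.cons_prefix_cons] at h
      exact absurd h.1.symm (hc a)
    | cons b ν =>
      simp only [enc0, List.map_cons, List.cons_append, List.cons_prefix_cons] at h
      have hab : a = b := by have := (J lam).injective h.1; simpa using this
      subst hab
      exact List.cons_prefix_cons.2 ⟨rfl, ih ν r h.2⟩

lemma LC {c : lam} (hc : ∀ a, c ≠ J lam (inl a)) :
    ∀ (ν η r : List lam), ¬ (enc0 η ++ c :: r <+: enc0 ν) := by
  intro ν
  induction ν with
  | nil =>
    intro η r h
    cases η with
    | nil => simp [enc0] at h
    | cons a η => simp [enc0] at h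
  | cons b ν ih =>
    intro η r h
    cases η with
    | nil =>
      simp only [enc0, List.map_nil, List.nil_append, List.map_cons,
        List.cons_prefix_cons] at h
      exact absurd h.1 (hc b)
    | cons a η =>
      simp only [enc0, List.map_cons, List.cons_append, List.cons_prefix_cons] at h
      exact ih η r h.2

lemma LD {c c' : lam} (hc : ∀ a, c ≠ J lam (inl a)) (hc' : ∀ a, c' ≠ J lam (inl a)) :
    ∀ (η ν r r' : List lam), enc0 η ++ c :: r <+: enc0 ν ++ c' :: r' →
      η = ν ∧ c = c' ∧ r <+: r' := by
  intro η
  induction η with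
  | nil =>
    intro ν r r' h
    cases ν with
    | nil =>
      simp only [enc0, List.map_nil, List.nil_append, List.cons_prefix_cons] at h
      exact ⟨rfl, h.1, h.2⟩
    | cons b ν =>
      simp only [enc0, List.map_nil, List.nil_append, List.map_cons, List.cons_append,
        List.cons_prefix_cons] at h
      exact absurd h.1 (hc b)
  | cons a η ih =>
    intro ν r r' h
    cases ν with
    | nil =>
      simp only [enc0, List.map_cons, List.map_nil, List.nil_append, List.cons_append,
        List.cons_prefix_cons] at h
      exact absurd h.1.symm (hc' a)
    | cons b ν =>
      simp only [enc0, List.map_cons, List.cons_append, List.cons_prefix_cons] at h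
      have hab : a = b := by have := (J lam).injective h.1; simpa using this
      subst hab
      obtain ⟨h1, h2, h3⟩ := ih ν r r' h.2
      exact ⟨by rw [h1], h2, h3⟩

lemma enc_inj : Function.Injective (enc : Node lam → List lam) := by
  rintro (η | ⟨η, u | ⟨i, s⟩⟩) (ν | ⟨ν, v | ⟨j, t⟩⟩) h <;>
    simp only [enc] at h
  · rw [enc0_inj h]
  · exact absurd (h ▸ prefix_rfl) (LC hm1 η ν [])
  · exact absurd (h ▸ prefix_rfl) (LC (hm2 j) η ν t)
  · exact absurd (show enc0 η ++ [m1 lam] <+: enc0 ν by rw [h]) (LC hm1 ν η [])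
  · obtain ⟨rfl, -, -⟩ := LD hm1 hm1 η ν [] [] (h ▸ prefix_rfl)
    cases u; cases v; rfl
  · obtain ⟨rfl, h2, -⟩ := LD hm1 (hm2 j) η ν [] t (h ▸ prefix_rfl)
    exact absurd h2 (hm12 j)
  · exact absurd (show enc0 η ++ m2 i :: s <+: enc0 ν by rw [h]) (LC (hm2 i) ν η s)
  · obtain ⟨rfl, h2, -⟩ := LD (hm2 i) hm1 η ν s [] (h ▸ prefix_rfl)
    exact absurd h2.symm (hm12 i)
  · obtain ⟨rfl, h2, -⟩ := LD (hm2 i) (hm2 j) η ν s t (h ▸ prefix_rfl)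
    obtain rfl := m2_inj h2
    have h3 := List.append_cancel_left h
    obtain rfl := (List.cons.injEq _ _ _ _ ▸ h3).2
    rfl

lemma enc_le_iff (x y : Node lam) : AttachLe x y ↔ enc x <+: enc y := by
  rcases x with η | ⟨η, u | ⟨i, s⟩⟩ <;> rcases y with ν | ⟨ν, v | ⟨j, t⟩⟩ <;>
    simp only [enc]
  · rw [le_inl_inl, LA]
  · rw [le_inl_inr]
    constructor
    · intro h; exact ((LA.2 h).trans (List.prefix_append _ _))
    · intro h; exact LB hm1 η ν [] h
  · rw [le_inl_inr]
    constructor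
    · intro h; exact ((LA.2 h).trans (List.prefix_append _ _))
    · intro h; exact LB (hm2 j) η ν t h
  · cases u
    constructor
    · intro h; rw [le_leaf] at h; simp at h
    · intro h; exact absurd h (LC hm1 ν η [])
  · cases u; cases v
    rw [le_leaf]
    constructor
    · intro h
      obtain rfl : ν = η := by simpa using h
      exact prefix_rfl
    · intro h
      obtain ⟨rfl, -, -⟩ := LD hm1 hm1 η ν [] [] h
      rfl
  · cases u
    constructor
    · intro h; rw [le_leaf] at h; simp at h
    · intro h
      obtain ⟨rfl, h2, -⟩ := LD hm1 (hm2 j) η ν [] t h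
      exact absurd h2 (hm12 j)
  · constructor
    · intro h; rw [le_node] at h; obtain ⟨t, h, -⟩ := h; simp at h
    · intro h; exact absurd h (LC (hm2 i) ν η s)
  · cases v
    constructor
    · intro h; rw [le_node] at h; obtain ⟨t, h, -⟩ := h; simp at h
    · intro h
      obtain ⟨rfl, h2, -⟩ := LD (hm2 i) hm1 η ν s [] h
      exact absurd h2.symm (hm12 i)
  · rw [le_node_node]
    constructor
    · rintro ⟨rfl, rfl, h⟩
      exact (List.prefix_append_right_inj _).2 (List.cons_prefix_cons.2 ⟨rfl, h⟩)
    · intro h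
      obtain ⟨rfl, h2, h3⟩ := LD (hm2 i) (hm2 j) η ν s t h
      exact ⟨rfl, m2_inj h2, h3⟩

lemma prefix_append_cons {α : Type*} :
    ∀ (a l' : List α) {c : α} {r : List α}, l' <+: a ++ c :: r →
      l' <+: a ∨ ∃ r', l' = a ++ c :: r' ∧ r' <+: r := by
  intro a
  induction a with
  | nil =>
    intro l' c r h
    cases l' with
    | nil => exact Or.inl nil_prefix
    | cons x l' =>
      rw [List.nil_append, List.cons_prefix_cons] at h
      exact Or.inr ⟨l', by rw [h.1]; rfl, h.2⟩
  | cons b a ih =>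
    intro l' c r h
    cases l' with
    | nil => exact Or.inl nil_prefix
    | cons x l' =>
      rw [List.cons_append, List.cons_prefix_cons] at h
      obtain ⟨rfl, h⟩ := h
      rcases ih l' h with h1 | ⟨r', rfl, h2⟩
      · exact Or.inl (List.cons_prefix_cons.2 ⟨rfl, h1⟩)
      · exact Or.inr ⟨r', rfl, h2⟩

theorem part1 (A : lam → Set (List lam)) (hA : ∀ i, IsSubtree (A i))
    (V : List lam → Set lam) :
    ∃ T : Set (List lam), IsSubtree T ∧
      ∃ e : AttachCar lam A V ≃ {l : List lam // l ∈ T},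
        ∀ x y : AttachCar lam A V, AttachLe x.1 y.1 ↔ (e x).1 <+: (e y).1 := by
  have hnil : ∀ i, [] ∈ A i := by
    intro i
    obtain ⟨⟨l, hl⟩, hcl⟩ := hA i
    exact hcl l hl [] nil_prefix
  refine ⟨Set.range (fun x : AttachCar lam A V => enc x.1), ⟨⟨[], ⟨⟨inl [], fun _ _ _ h => by cases h⟩, rfl⟩⟩, ?_⟩, ?_⟩
  · rintro l ⟨x, rfl⟩ l' hp
    obtain ⟨w, hw⟩ := x
    rcases w with η | ⟨η, u | ⟨i, s⟩⟩ <;> simp only [enc] at hp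
    · -- prefix of enc0 η
      have h2 := List.prefix_iff_eq_take.1 hp
      rw [show (enc0 (η := η)).take l'.length = enc0 (η.take l'.length) from
        List.map_take.symm] at h2
      exact ⟨⟨inl (η.take l'.length), fun _ _ _ h => by cases h⟩, h2.symm⟩
    · rcases prefix_append_cons _ _ hp with h1 | ⟨r', rfl, h2⟩
      · have h2 := List.prefix_iff_eq_take.1 h1
        rw [show (enc0 (η := η)).take l'.length = enc0 (η.take l'.length) from
          List.map_take.symm] at h2
        exact ⟨⟨inl (η.take l'.length), fun _ _ _ h => by cases h⟩, h2.symm⟩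
      · rw [List.prefix_nil.1 h2]
        exact ⟨⟨inr (η, inl ()), fun _ _ _ h => by simp at h⟩, rfl⟩
    · rcases prefix_append_cons _ _ hp with h1 | ⟨r', rfl, h2⟩
      · have h2 := List.prefix_iff_eq_take.1 h1
        rw [show (enc0 (η := η)).take l'.length = enc0 (η.take l'.length) from
          List.map_take.symm] at h2
        exact ⟨⟨inl (η.take l'.length), fun _ _ _ h => by cases h⟩, h2.symm⟩
      · have hi := hw η i s rfl
        refine ⟨⟨inr (η, inr (i, r')), ?_⟩, rfl⟩
        rintro η' i' s' h
        simp only [inr.injEq, Prod.mk.injEq] at h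
        obtain ⟨rfl, rfl, rfl⟩ := h
        exact ⟨hi.1, (hA i).2 s hi.2 r' h2⟩
  · refine ⟨Equiv.ofBijective (fun x => ⟨enc x.1, ⟨x, rfl⟩⟩) ⟨?_, ?_⟩, ?_⟩
    · intro x y h
      exact Subtype.ext (enc_inj (congrArg Subtype.val h))
    · rintro ⟨l, x, rfl⟩
      exact ⟨x, rfl⟩
    · intro x y
      exact enc_le_iff x.1 y.1

end Encoding

end ColProof
namespace ColProof

section Transfer

variable {M N : Type*} {r : M → M → Prop} {s : N → N → Prop}

def Iso (r : M → M → Prop) (s : N → N → Prop) (F : Set (Finset (M × N))) : Prop :=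
  ∀ p ∈ F, IsPartialIso r s p

def Ext (F : Set (Finset (M × N))) : Prop :=
  ∀ p ∈ F, ∀ a : M, ∀ b : N,
    ∃ q ∈ F, p ⊆ q ∧ (∃ b', (a, b') ∈ q) ∧ (∃ a', (a', b) ∈ q)

def Strict (r : M → M → Prop) (x y : M) : Prop := r x y ∧ x ≠ y

def CoversR (r : M → M → Prop) (x y : M) : Prop :=
  Strict r x y ∧ ∀ z, Strict r x z → Strict r z y → False

def MaxR (r : M → M → Prop) (x : M) : Prop := ∀ y, Strict r x y → False

def HasChain (r : M → M → Prop) (x : M) : Prop :=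
  ∃ c : ℕ → M, c 0 = x ∧ ∀ n, Strict r (c n) (c (n + 1))

def Phi (r : M → M → Prop) (x : M) : Prop :=
  HasChain r x ∧ ∃ y, CoversR r x y ∧ MaxR r y

/-- swapping a finite partial map -/
def pswap (p : Finset (M × N)) : Finset (N × M) :=
  p.map ⟨Prod.swap, Prod.swap_injective⟩

lemma mem_pswap {p : Finset (M × N)} {a : M} {b : N} :
    (b, a) ∈ pswap p ↔ (a, b) ∈ p := by
  simp only [pswap, Finset.mem_map, Function.Embedding.coeFn_mk]
  constructor
  · rintro ⟨⟨a', b'⟩, h, h2⟩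
    obtain ⟨rfl, rfl⟩ : b' = b ∧ a' = a := by
      simpa [Prod.swap, Prod.ext_iff] using h2
    exact h
  · intro h; exact ⟨(a, b), h, rfl⟩

def Fswap (F : Set (Finset (M × N))) : Set (Finset (N × M)) := pswap '' F

lemma Fswap_mem {F : Set (Finset (M × N))} {p : Finset (M × N)} (hp : p ∈ F) :
    pswap p ∈ Fswap F := ⟨p, hp, rfl⟩

lemma iso_swap {F : Set (Finset (M × N))} (h : Iso r s F) : Iso s r (Fswap F) := by
  rintro p' ⟨p, hp, rfl⟩
  obtain ⟨h1, h2, h3⟩ := h p hp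
  refine ⟨?_, ?_, ?_⟩
  · intro x y y' hxy hxy'
    exact h2 y y' x (mem_pswap.1 hxy) (mem_pswap.1 hxy')
  · intro x x' y hxy hx'y
    exact h1 y x x' (mem_pswap.1 hxy) (mem_pswap.1 hx'y)
  · intro x y x' y' hxy hx'y'
    exact (h3 y x y' x' (mem_pswap.1 hxy) (mem_pswap.1 hx'y')).symm

lemma ext_swap {F : Set (Finset (M × N))} (h : Ext F) : Ext (Fswap F) := by
  rintro p' ⟨p, hp, rfl⟩ a b
  obtain ⟨q, hq, hpq, ⟨b', hb'⟩, ⟨a', ha'⟩⟩ := h p hp b a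
  exact ⟨pswap q, Fswap_mem hq, Finset.map_subset_map.2 hpq,
    ⟨a', mem_pswap.2 ha'⟩, ⟨b', mem_pswap.2 hb'⟩⟩

variable {F : Set (Finset (M × N))}

lemma transfer_strict (hI : Iso r s F) {p : Finset (M × N)} (hp : p ∈ F)
    {x x' : M} {y y' : N} (hxy : (x, y) ∈ p) (hx'y' : (x', y') ∈ p)
    (h : Strict r x x') : Strict s y y' := by
  obtain ⟨h1, h2, h3⟩ := hI p hp
  refine ⟨(h3 x y x' y' hxy hx'y').1 h.1, ?_⟩
  rintro rfl
  exact h.2 (h2 x x' y hxy hx'y')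

lemma transfer_strict' (hI : Iso r s F) {p : Finset (M × N)} (hp : p ∈ F)
    {x x' : M} {y y' : N} (hxy : (x, y) ∈ p) (hx'y' : (x', y') ∈ p)
    (h : Strict s y y') : Strict r x x' := by
  obtain ⟨h1, h2, h3⟩ := hI p hp
  refine ⟨(h3 x y x' y' hxy hx'y').2 h.1, ?_⟩
  rintro rfl
  exact h.2 (h1 x y y' hxy hx'y')

lemma transfer_max (hI : Iso r s F) (hE : Ext F) {p : Finset (M × N)} (hp : p ∈ F)
    {x : M} {y : N} (hxy : (x, y) ∈ p) (h : MaxR r x) : MaxR s y := by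
  intro z hz
  obtain ⟨q, hq, hpq, -, ⟨w, hw⟩⟩ := hE p hp x z
  exact h w (transfer_strict' hI hq (hpq hxy) hw hz)

lemma transfer_covers (hI : Iso r s F) (hE : Ext F) {p : Finset (M × N)} (hp : p ∈ F)
    {x x' : M} {y y' : N} (hxy : (x, y) ∈ p) (hx'y' : (x', y') ∈ p)
    (h : CoversR r x x') : CoversR s y y' := by
  refine ⟨transfer_strict hI hp hxy hx'y' h.1, ?_⟩
  intro z hz1 hz2
  obtain ⟨q, hq, hpq, -, ⟨w, hw⟩⟩ := hE p hp x z
  exact h.2 w (transfer_strict' hI hq (hpq hxy) hw hz1)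
    (transfer_strict' hI hq hw (hpq hx'y') hz2)

lemma transfer_chain (hI : Iso r s F) (hE : Ext F) {p : Finset (M × N)} (hp : p ∈ F)
    {x : M} {y : N} (hxy : (x, y) ∈ p) (h : HasChain r x) : HasChain s y := by
  obtain ⟨c, hc0, hc⟩ := h
  have ext' : ∀ q ∈ F, ∀ a : M, ∃ q', (q' ∈ F ∧ q ⊆ q') ∧ ∃ b, (a, b) ∈ q' := by
    intro q hq a
    obtain ⟨q', hq', hqq', hb, -⟩ := hE q hq a y
    exact ⟨q', ⟨hq', hqq'⟩, hb⟩
  let g : ℕ → {q : Finset (M × N) // q ∈ F ∧ p ⊆ q} := fun n =>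
    Nat.rec
      ⟨(ext' p hp (c 0)).choose, (ext' p hp (c 0)).choose_spec.1.1,
        (ext' p hp (c 0)).choose_spec.1.2⟩
      (fun n ih =>
        ⟨(ext' ih.1 ih.2.1 (c (n + 1))).choose,
          (ext' ih.1 ih.2.1 (c (n + 1))).choose_spec.1.1,
          ih.2.2.trans (ext' ih.1 ih.2.1 (c (n + 1))).choose_spec.1.2⟩) n
  have hgsub : ∀ n, (g n).1 ⊆ (g (n + 1)).1 := fun n =>
    (ext' (g n).1 (g n).2.1 (c (n + 1))).choose_spec.1.2
  have hgc : ∀ n, ∃ b, (c n, b) ∈ (g n).1 := by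
    intro n
    cases n with
    | zero => exact (ext' p hp (c 0)).choose_spec.2
    | succ n => exact (ext' (g n).1 (g n).2.1 (c (n + 1))).choose_spec.2
  let d : ℕ → N := fun n => (hgc n).choose
  have hd : ∀ n, (c n, d n) ∈ (g n).1 := fun n => (hgc n).choose_spec
  have hd0 : d 0 = y := by
    obtain ⟨h1, -, -⟩ := hI (g 0).1 (g 0).2.1
    have hxy0 : (x, y) ∈ (g 0).1 := (g 0).2.2 hxy
    rw [← hc0] at hxy0
    exact (h1 (c 0) (d 0) y (hd 0) hxy0)
  refine ⟨d, hd0, ?_⟩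
  intro n
  exact transfer_strict hI (g (n + 1)).2.1 (hgsub n (hd n)) (hd (n + 1)) (hc n)

lemma transfer_phi (hI : Iso r s F) (hE : Ext F) {p : Finset (M × N)} (hp : p ∈ F)
    {x : M} {y : N} (hxy : (x, y) ∈ p) (h : Phi r x) : Phi s y := by
  obtain ⟨hch, m, hcov, hmax⟩ := h
  obtain ⟨q, hq, hpq, ⟨m', hm'⟩, -⟩ := hE p hp m y
  exact ⟨transfer_chain hI hE hp hxy hch, m',
    transfer_covers hI hE hq (hpq hxy) hm' hcov,
    transfer_max hI hE hq hm' hmax⟩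

end Transfer

end ColProof
namespace ColProof

open List Sum

section Car

variable {lam : Type} {A : lam → Set (List lam)} {V : List lam → Set lam}

def relA (A : lam → Set (List lam)) (V : List lam → Set lam) :
    AttachCar lam A V → AttachCar lam A V → Prop := fun x y => AttachLe x.1 y.1

def mkInl (η : List lam) : AttachCar lam A V :=
  ⟨inl η, fun _ _ _ h => by cases h⟩

def mkLeaf (η : List lam) : AttachCar lam A V :=
  ⟨inr (η, inl ()), fun _ _ _ h => by simp at h⟩

def mkNode (η : List lam) (i : lam) (s : List lam) (hi : i ∈ V η) (hs : s ∈ A i) :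
    AttachCar lam A V :=
  ⟨inr (η, inr (i, s)), by
    rintro η' i' s' h
    simp only [inr.injEq, Prod.mk.injEq] at h
    obtain ⟨rfl, rfl, rfl⟩ := h
    exact ⟨hi, hs⟩⟩

lemma val_ne {x y : AttachCar lam A V} (h : x.1 ≠ y.1) : x ≠ y :=
  fun e => h (congrArg Subtype.val e)

lemma max_leaf (η : List lam) : MaxR (relA A V) (mkLeaf η) := by
  rintro y ⟨h1, h2⟩
  have h3 := le_leaf.1 h1
  exact h2 (Subtype.ext h3.symm)

lemma covers_leaf (η : List lam) : CoversR (relA A V) (mkInl η) (mkLeaf η) := by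
  refine ⟨⟨le_inl_inr.2 prefix_rfl, val_ne (by simp [mkInl, mkLeaf])⟩, ?_⟩
  rintro ⟨w, hw⟩ hz1 hz2
  rcases w with ρ | ⟨ρ, u | ⟨j, t⟩⟩
  · have hp1 : η <+: ρ := le_inl_inl.1 hz1.1
    have hp2 : ρ <+: η := le_inl_inr.1 hz2.1
    have he : η = ρ := hp1.eq_of_length (hp1.length_le.antisymm hp2.length_le)
    exact hz1.2 (Subtype.ext (by simp [mkInl, he]))
  · cases u
    have h3 := le_leaf.1 hz2.1
    obtain rfl : η = ρ := by simpa [mkLeaf] using h3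
    exact hz2.2 (Subtype.ext rfl)
  · obtain ⟨t', ht', -⟩ := le_node.1 hz2.1
    simp [mkLeaf] at ht'

lemma covers_node0 (η : List lam) (i : lam) (hi : i ∈ V η) (hnil : [] ∈ A i) :
    CoversR (relA A V) (mkInl η) (mkNode η i [] hi hnil) := by
  refine ⟨⟨le_inl_inr.2 prefix_rfl, val_ne (by simp [mkInl, mkNode])⟩, ?_⟩
  rintro ⟨w, hw⟩ hz1 hz2
  rcases w with ρ | ⟨ρ, u | ⟨j, t⟩⟩
  · have hp1 : η <+: ρ := le_inl_inl.1 hz1.1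
    have hp2 : ρ <+: η := le_inl_inr.1 hz2.1
    have he : η = ρ := hp1.eq_of_length (hp1.length_le.antisymm hp2.length_le)
    exact hz1.2 (Subtype.ext (by simp [mkInl, he]))
  · cases u
    have h3 := le_leaf.1 hz2.1
    simp [mkNode] at h3
  · obtain ⟨he1, he2, he3⟩ := le_node_node.1 hz2.1
    obtain rfl := List.prefix_nil.1 he3
    exact hz2.2 (Subtype.ext (by simp [mkNode, he1, he2]))

variable [Infinite lam]

lemma chain_inl (η : List lam) : HasChain (relA A V) (mkInl η) := by
  have a0 : lam := Classical.arbitrary lam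
  refine ⟨fun n => mkInl (η ++ List.replicate n a0), Subtype.ext (by simp [mkInl]), ?_⟩
  intro n
  constructor
  · exact le_inl_inl.2 ⟨[a0], by rw [List.append_assoc, ← List.replicate_succ']⟩
  · apply val_ne
    intro h
    simp only [mkInl, inl.injEq] at h
    have := congrArg List.length h
    simp at this

lemma phi_inl (η : List lam) : Phi (relA A V) (mkInl η) :=
  ⟨chain_inl η, mkLeaf η, covers_leaf η, max_leaf η⟩

lemma not_phi_leaf (η : List lam) : ¬ Phi (relA A V) (mkLeaf η) := by
  rintro ⟨⟨c, hc0, hc⟩, -⟩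
  have h1 := hc 0
  rw [hc0] at h1
  have h2 := le_leaf.1 h1.1
  exact h1.2 (Subtype.ext h2.symm)

lemma not_phi_node (hA : ∀ i, IsSubtree (A i) ∧ IsSpecial (A i))
    (x : AttachCar lam A V) (η : List lam) (i : lam) (s : List lam)
    (hx : x.1 = inr (η, inr (i, s))) : ¬ Phi (relA A V) x := by
  rintro ⟨⟨c, hc0, hc⟩, m, hcov, hmax⟩
  obtain ⟨hiV, hsA⟩ := x.2 η i s hx
  have claim : ∀ n, ∃ t : List lam, (c n).1 = inr (η, inr (i, t)) ∧ t ∈ A i ∧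
      s <+: t ∧ n + s.length ≤ t.length := by
    intro n
    induction n with
    | zero => rw [hc0]; exact ⟨s, hx, hsA, prefix_rfl, by omega⟩
    | succ n ih =>
      obtain ⟨t, h1, h2, h3, h4⟩ := ih
      have hrel : AttachLe (inr (η, inr (i, t))) (c (n + 1)).1 := by
        rw [← h1]; exact (hc n).1
      obtain ⟨t', ht', htt'⟩ := le_node.1 hrel
      have ht'A := ((c (n + 1)).2 η i t' ht').2
      have hne : t ≠ t' := by
        rintro rfl
        exact (hc n).2 (Subtype.ext (by rw [h1, ht']))
      have hlen : t.length < t'.length :=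
        lt_of_le_of_ne htt'.length_le (fun e => hne (htt'.eq_of_length e))
      exact ⟨t', ht', ht'A, h3.trans htt', by omega⟩
  choose t hct htA hst hlent using claim
  have ht0 : t 0 = s := by
    have h := hct 0
    rw [hc0, hx] at h
    simpa using h.symm
  have hmono : ∀ n, t n <+: t (n + 1) := by
    intro n
    have hrel : AttachLe (inr (η, inr (i, t n))) (c (n + 1)).1 := by
      rw [← hct n]; exact (hc n).1
    obtain ⟨t', ht', htt'⟩ := le_node.1 hrel
    have he : t' = t (n + 1) := by
      rw [hct (n + 1)] at ht'
      simpa using ht'.symm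
    rw [← he]; exact htt'
  have hmono' : ∀ n m, n ≤ m → t n <+: t m := by
    intro n m h
    induction m with
    | zero => obtain rfl := Nat.le_zero.1 h; exact prefix_rfl
    | succ m ih =>
      rcases Nat.eq_or_lt_of_le h with rfl | h2
      · exact prefix_rfl
      · exact (ih (Nat.lt_succ_iff.1 h2)).trans (hmono m)
  have a0 : lam := Classical.arbitrary lam
  set ν : ℕ → lam := fun n => (t (n + 1)).getD n a0 with hνdef
  have hlen' : ∀ n, n ≤ (t n).length := fun n => le_trans (by omega) (hlent n)
  have hνk : ∀ n k, k < n → ∀ (hk : k < (t n).length), ν k = (t n)[k] := by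
    intro n k hk hk2
    have h1 : k < (t (k + 1)).length := lt_of_lt_of_le (by omega) (hlen' (k + 1))
    show (t (k + 1)).getD k a0 = (t n)[k]
    rw [List.getD_eq_getElem _ _ h1]
    exact (hmono' (k + 1) n hk).getElem h1
  have hbranch : InBranch (A i) s := by
    refine ⟨ν, ?_, ?_⟩
    · intro n
      have hn := hlen' n
      have heq : (List.ofFn fun j : Fin n => ν j) = (t n).take n := by
        apply List.ext_getElem
        · simp [List.length_take]; omega
        · intro k h1 h2
          simp only [List.getElem_ofFn, List.getElem_take]
          have hk : k < n := by simpa using h1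
          exact hνk n k hk (lt_of_lt_of_le hk hn)
      rw [heq]
      exact (hA i).1.2 _ (htA n) _ (List.take_prefix _ _)
    · apply List.ext_getElem
      · simp
      · intro k h1 h2
        simp only [List.getElem_ofFn]
        have hk0 : k < (t 0).length := by rw [ht0]; exact h1
        have h3 : (t 0)[k] = ν k := by
          have h4 : k < (t (k + 1)).length := lt_of_lt_of_le (by omega) (hlen' (k + 1))
          have := (hmono' 0 (k + 1) (by omega)).getElem hk0
          rw [this]
          show _ = (t (k + 1)).getD k a0
          rw [List.getD_eq_getElem _ _ h4]
        rw [← h3]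
        exact (List.getElem_of_eq ht0 hk0).symm
  obtain ⟨hstr, hbet⟩ := hcov
  have hrelm : AttachLe (inr (η, inr (i, s))) m.1 := by rw [← hx]; exact hstr.1
  obtain ⟨u, hu, hsu⟩ := le_node.1 hrelm
  have huA := (m.2 η i u hu).2
  have hne : s ≠ u := by
    rintro rfl
    exact hstr.2 (Subtype.ext (by rw [hx, hu]))
  have hlt : s.length < u.length :=
    lt_of_le_of_ne hsu.length_le (fun e => hne (hsu.eq_of_length e))
  have hulen : u.length = s.length + 1 := by
    by_contra hne2
    have hgt : s.length + 1 < u.length := by omega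
    have hz : u.take (s.length + 1) ∈ A i := (hA i).1.2 u huA _ (List.take_prefix _ _)
    refine hbet (mkNode η i (u.take (s.length + 1)) hiV hz) ⟨?_, ?_⟩ ⟨?_, ?_⟩
    · show AttachLe x.1 _
      rw [hx]
      exact le_node_node.2 ⟨rfl, rfl, List.prefix_take_iff.2 ⟨hsu, by omega⟩⟩
    · intro e
      have h5 := congrArg Subtype.val e
      rw [hx] at h5
      simp only [mkNode, inr.injEq, Prod.mk.injEq] at h5
      have hl := congrArg List.length h5.2.2
      simp [List.length_take] at hl
      omega
    · show AttachLe _ m.1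
      rw [hu]
      exact le_node_node.2 ⟨rfl, rfl, List.take_prefix _ _⟩
    · intro e
      have h5 := congrArg Subtype.val e
      rw [hu] at h5
      simp only [mkNode, inr.injEq, Prod.mk.injEq] at h5
      have hl := congrArg List.length h5.2.2
      simp [List.length_take] at hl
      omega
  obtain ⟨ρ, hρA, huρ, hneuρ⟩ := (hA i).2 s hsA hbranch u huA hsu hulen
  refine hmax (mkNode η i ρ hiV hρA) ⟨?_, ?_⟩
  · show AttachLe m.1 _
    rw [hu]
    exact le_node_node.2 ⟨rfl, rfl, huρ⟩
  · intro e
    have h5 := congrArg Subtype.val e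
    rw [hu] at h5
    simp only [mkNode, inr.injEq, Prod.mk.injEq] at h5
    exact hneuρ h5.2.2

lemma phi_iff_inl (hA : ∀ i, IsSubtree (A i) ∧ IsSpecial (A i))
    (x : AttachCar lam A V) : Phi (relA A V) x ↔ ∃ ρ, x.1 = inl ρ := by
  constructor
  · intro h
    rcases hx : x.1 with ρ | ⟨ρ, u | ⟨j, t⟩⟩
    · exact ⟨ρ, rfl⟩
    · cases u
      obtain rfl : x = mkLeaf ρ := Subtype.ext hx
      exact absurd h (not_phi_leaf ρ)
    · exact absurd h (not_phi_node hA x ρ j t hx)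
  · rintro ⟨ρ, hx⟩
    obtain rfl : x = mkInl ρ := Subtype.ext hx
    exact phi_inl ρ

lemma covers_classify (hA : ∀ i, IsSubtree (A i) ∧ IsSpecial (A i))
    {ν : List lam} {b : AttachCar lam A V} (hcov : CoversR (relA A V) (mkInl ν) b)
    (hnphi : ¬ Phi (relA A V) b) :
    b = mkLeaf ν ∨ ∃ j, j ∈ V ν ∧ b.1 = inr (ν, inr (j, [])) := by
  rcases hb : b.1 with ρ | ⟨ρ, u | ⟨j, t⟩⟩
  · obtain rfl : b = mkInl ρ := Subtype.ext hb
    exact absurd (phi_inl ρ) hnphi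
  · cases u
    have hp : ν <+: ρ := le_inl_inr.1 (show AttachLe (inl ν) (inr (ρ, inl ())) by
      rw [← hb]; exact hcov.1.1)
    have he : ν = ρ := by
      by_contra hne
      refine hcov.2 (mkInl ρ) ⟨le_inl_inl.2 hp, ?_⟩ ⟨?_, ?_⟩
      · exact val_ne (by simp [mkInl]; exact hne)
      · show AttachLe (mkInl ρ : AttachCar lam A V).1 b.1
        rw [hb]
        exact le_inl_inr.2 prefix_rfl
      · exact val_ne (by rw [hb]; simp [mkInl])
    left
    apply Subtype.ext
    rw [hb, he]
    rfl
  · have hp : ν <+: ρ := le_inl_inr.1 (show AttachLe (inl ν) (inr (ρ, inr (j, t))) by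
      rw [← hb]; exact hcov.1.1)
    have he : ν = ρ := by
      by_contra hne
      refine hcov.2 (mkInl ρ) ⟨le_inl_inl.2 hp, ?_⟩ ⟨?_, ?_⟩
      · exact val_ne (by simp [mkInl]; exact hne)
      · show AttachLe (mkInl ρ : AttachCar lam A V).1 b.1
        rw [hb]
        exact le_inl_inr.2 prefix_rfl
      · exact val_ne (by rw [hb]; simp [mkInl])
    subst he
    obtain ⟨hjV, htA⟩ := b.2 ν j t hb
    have ht : t = [] := by
      by_contra hne
      refine hcov.2 (mkNode ν j [] hjV ((hA j).1.2 t htA [] nil_prefix)) ⟨?_, ?_⟩ ⟨?_, ?_⟩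
      · exact le_inl_inr.2 prefix_rfl
      · exact val_ne (by simp [mkInl, mkNode])
      · show AttachLe (mkNode ν j [] _ _ : AttachCar lam A V).1 b.1
        rw [hb]
        exact le_node_node.2 ⟨rfl, rfl, nil_prefix⟩
      · refine val_ne ?_
        rw [hb]
        simp only [mkNode, ne_eq, inr.injEq, Prod.mk.injEq]
        intro h
        exact hne h.2.2.symm
    right
    exact ⟨j, hjV, by rw [ht]⟩

end Car

end ColProof
namespace ColProof

open List Sum

section Color

variable {lam : Type} [Infinite lam] {A : lam → Set (List lam)}

lemma singletonBF {j j' : lam} (hn1 : [] ∈ A j) (hn2 : [] ∈ A j')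
    (h1 : ∀ t ∈ A j, t = []) (h2 : ∀ t ∈ A j', t = []) :
    BackForth (fun a b : {l : List lam // l ∈ A j} => a.1 <+: b.1)
      (fun a b : {l : List lam // l ∈ A j'} => a.1 <+: b.1) := by
  classical
  refine ⟨{({(⟨[], hn1⟩, ⟨[], hn2⟩)} : Finset _)}, ⟨_, rfl⟩, ?_, ?_⟩
  · rintro p rfl
    refine ⟨?_, ?_, ?_⟩
    · intro x y y' hxy hxy'
      simp only [Finset.mem_singleton, Prod.ext_iff] at hxy hxy'
      rw [hxy.2, hxy'.2]
    · intro x x' y hxy hx'y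
      simp only [Finset.mem_singleton, Prod.ext_iff] at hxy hx'y
      rw [hxy.1, hx'y.1]
    · intro x y x' y' hxy hx'y'
      simp only [Finset.mem_singleton, Prod.ext_iff] at hxy hx'y'
      obtain ⟨rfl, rfl⟩ := hxy
      obtain ⟨rfl, rfl⟩ := hx'y'
      simp
  · rintro p rfl a b
    have ha : a = ⟨[], hn1⟩ := Subtype.ext (h1 a.1 a.2)
    have hb : b = ⟨[], hn2⟩ := Subtype.ext (h2 b.1 b.2)
    refine ⟨_, rfl, subset_rfl, ⟨⟨[], hn2⟩, ?_⟩, ⟨⟨[], hn1⟩, ?_⟩⟩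
    · rw [ha]; exact Finset.mem_singleton_self _
    · rw [hb]; exact Finset.mem_singleton_self _

lemma subBF {V W : List lam → Set lam}
    {G : Set (Finset (AttachCar lam A V × AttachCar lam A W))}
    (hIso : Iso (relA A V) (relA A W) G) (hExt : Ext G)
    {q : Finset (AttachCar lam A V × AttachCar lam A W)} (hq : q ∈ G)
    {η ν : List lam} {j j' : lam}
    {a : AttachCar lam A V} {b : AttachCar lam A W}
    (hab : (a, b) ∈ q) (hav : a.1 = inr (η, inr (j, ([] : List lam))))
    (hbv : b.1 = inr (ν, inr (j', ([] : List lam)))) :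
    BackForth (fun x y : {l : List lam // l ∈ A j} => x.1 <+: y.1)
      (fun x y : {l : List lam // l ∈ A j'} => x.1 <+: y.1) := by
  classical
  obtain ⟨hjV, -⟩ := a.2 η j [] hav
  obtain ⟨hj'W, -⟩ := b.2 ν j' [] hbv
  refine ⟨{r | ∃ q' ∈ G, (a, b) ∈ q' ∧ ∀ u ∈ r,
      ((mkNode η j u.1.1 hjV u.1.2 : AttachCar lam A V),
       (mkNode ν j' u.2.1 hj'W u.2.2 : AttachCar lam A W)) ∈ q'},
    ⟨∅, q, hq, hab, by simp⟩, ?_, ?_⟩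
  · rintro r ⟨q', hq', hab', hr⟩
    refine ⟨?_, ?_, ?_⟩
    · intro x y y' hxy hxy'
      have h1 := hr _ hxy
      have h2 := hr _ hxy'
      have h3 := (hIso q' hq').1 _ _ _ h1 h2
      have h4 := congrArg Subtype.val h3
      apply Subtype.ext
      simpa [mkNode] using h4
    · intro x x' y hxy hx'y
      have h1 := hr _ hxy
      have h2 := hr _ hx'y
      have h3 := (hIso q' hq').2.1 _ _ _ h1 h2
      have h4 := congrArg Subtype.val h3
      apply Subtype.ext
      simpa [mkNode] using h4
    · intro x y x' y' hxy hx'y'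
      have h1 := hr _ hxy
      have h2 := hr _ hx'y'
      have h3 := (hIso q' hq').2.2 _ _ _ _ h1 h2
      constructor
      · intro h
        have h4 := h3.1 (le_node_node.2 ⟨rfl, rfl, h⟩)
        exact (le_node_node.1 h4).2.2
      · intro h
        have h4 := h3.2 (le_node_node.2 ⟨rfl, rfl, h⟩)
        exact (le_node_node.1 h4).2.2
  · rintro r ⟨q', hq', hab', hr⟩ s₀ t₀
    obtain ⟨q'', hq'', hsub, ⟨c, hc⟩, ⟨d, hd⟩⟩ :=
      hExt q' hq' (mkNode η j s₀.1 hjV s₀.2) (mkNode ν j' t₀.1 hj'W t₀.2)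
    have hrel1 : AttachLe a.1 (mkNode η j s₀.1 hjV s₀.2 : AttachCar lam A V).1 := by
      rw [hav]; exact le_node_node.2 ⟨rfl, rfl, nil_prefix⟩
    have hrel2 : AttachLe b.1 c.1 :=
      ((hIso q'' hq'').2.2 _ _ _ _ (hsub hab') hc).1 hrel1
    rw [hbv] at hrel2
    obtain ⟨tc, htc, -⟩ := le_node.1 hrel2
    have htcA := (c.2 ν j' tc htc).2
    have hrel3 : AttachLe b.1 (mkNode ν j' t₀.1 hj'W t₀.2 : AttachCar lam A W).1 := by
      rw [hbv]; exact le_node_node.2 ⟨rfl, rfl, nil_prefix⟩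
    have hrel4 : AttachLe a.1 d.1 :=
      ((hIso q'' hq'').2.2 _ _ _ _ (hsub hab') hd).2 hrel3
    rw [hav] at hrel4
    obtain ⟨td, htd, -⟩ := le_node.1 hrel4
    have htdA := (d.2 η j td htd).2
    have hceq : (mkNode ν j' tc hj'W htcA : AttachCar lam A W) = c :=
      Subtype.ext (by rw [htc]; rfl)
    have hdeq : (mkNode η j td hjV htdA : AttachCar lam A V) = d :=
      Subtype.ext (by rw [htd]; rfl)
    refine ⟨r ∪ {(s₀, ⟨tc, htcA⟩), (⟨td, htdA⟩, t₀)}, ⟨q'', hq'', hsub hab', ?_⟩,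
      Finset.subset_union_left, ⟨⟨tc, htcA⟩, by simp⟩, ⟨⟨td, htdA⟩, by simp⟩⟩
    rintro u hu
    rcases Finset.mem_union.1 hu with hu | hu
    · exact hsub (hr _ hu)
    · rcases Finset.mem_insert.1 hu with rfl | hu
      · rw [hceq]; exact hc
      · rw [Finset.mem_singleton] at hu
        subst hu
        rw [hdeq]; exact hd

lemma color_main (hA : ∀ i, IsSubtree (A i) ∧ IsSpecial (A i))
    (hApair : ∀ i j, i ≠ j →
      ¬ BackForth (fun a b : {l : List lam // l ∈ A i} => a.1 <+: b.1)
          (fun a b : {l : List lam // l ∈ A j} => a.1 <+: b.1))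
    {P Q : lam → Set (List lam)}
    {G : Set (Finset (AttachCar lam A (colorSet P) × AttachCar lam A (colorSet Q)))}
    (hIso : Iso (relA A (colorSet P)) (relA A (colorSet Q)) G) (hExt : Ext G)
    {p : Finset (AttachCar lam A (colorSet P) × AttachCar lam A (colorSet Q))}
    (hp : p ∈ G) {η ν : List lam}
    (hpair : ((mkInl η : AttachCar lam A (colorSet P)),
      (mkInl ν : AttachCar lam A (colorSet Q))) ∈ p)
    {j : lam} (hj : η ∈ P j) : ν ∈ Q j := by
  classical
  have hnil : ∀ i, [] ∈ A i := fun i =>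
    (hA i).1.2 _ (hA i).1.1.choose_spec _ nil_prefix
  have hjV : j ∈ colorSet P η := hj
  obtain ⟨q, hq, hpq, ⟨b, hab⟩, -⟩ := hExt p hp (mkNode η j [] hjV (hnil j)) (mkInl [])
  have hinq := hpq hpair
  have hcov : CoversR (relA A (colorSet Q)) (mkInl ν) b :=
    transfer_covers hIso hExt hq hinq hab (covers_node0 η j hjV (hnil j))
  have hnphi : ¬ Phi (relA A (colorSet Q)) b := by
    intro h
    have h2 := transfer_phi (iso_swap hIso) (ext_swap hExt) (Fswap_mem hq)
      (mem_pswap.2 hab) h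
    exact not_phi_node hA _ η j [] rfl h2
  rcases covers_classify hA hcov hnphi with hb | ⟨j', hj'W, hb⟩
  · subst hb
    have hamax : MaxR (relA A (colorSet P)) (mkNode η j [] hjV (hnil j)) :=
      transfer_max (iso_swap hIso) (ext_swap hExt) (Fswap_mem hq)
        (mem_pswap.2 hab) (max_leaf ν)
    have hAj : ∀ t ∈ A j, t = [] := by
      intro t ht
      by_contra hne
      refine hamax (mkNode η j t hjV ht) ⟨le_node_node.2 ⟨rfl, rfl, nil_prefix⟩, ?_⟩
      refine val_ne ?_
      simp only [mkNode, ne_eq, inr.injEq, Prod.mk.injEq]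
      intro h
      exact hne h.2.2.symm
    obtain ⟨q₂, hq₂, hqq₂, ⟨c, hlc⟩, -⟩ := hExt q hq (mkLeaf η) (mkInl [])
    have hcov2 : CoversR (relA A (colorSet Q)) (mkInl ν) c :=
      transfer_covers hIso hExt hq₂ (hqq₂ hinq) hlc (covers_leaf η)
    have hnphi2 : ¬ Phi (relA A (colorSet Q)) c := by
      intro h
      have h2 := transfer_phi (iso_swap hIso) (ext_swap hExt) (Fswap_mem hq₂)
        (mem_pswap.2 hlc) h
      exact not_phi_leaf η h2
    rcases covers_classify hA hcov2 hnphi2 with hc | ⟨j', hj'W, hc⟩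
    · exfalso
      rw [hc] at hlc
      have h3 := (hIso q₂ hq₂).2.1 _ _ _ (hqq₂ hab) hlc
      have h4 := congrArg Subtype.val h3
      simp [mkNode, mkLeaf] at h4
    · have hcmax : MaxR (relA A (colorSet Q)) c :=
        transfer_max hIso hExt hq₂ hlc (max_leaf η)
      have hAj' : ∀ t ∈ A j', t = [] := by
        intro t ht
        by_contra hne
        refine hcmax (mkNode ν j' t hj'W ht) ⟨?_, ?_⟩
        · show AttachLe c.1 _
          rw [hc]
          exact le_node_node.2 ⟨rfl, rfl, nil_prefix⟩
        · refine val_ne ?_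
          rw [hc]
          simp only [mkNode, ne_eq, inr.injEq, Prod.mk.injEq]
          intro h
          exact hne h.2.2.symm
      by_cases hjj : j = j'
      · subst hjj; exact hj'W
      · exact absurd (singletonBF (hnil j) (hnil j') hAj hAj') (hApair j j' hjj)
  · have hBF := subBF hIso hExt hq hab rfl hb
    by_cases hjj : j = j'
    · subst hjj; exact hj'W
    · exact absurd hBF (hApair j j' hjj)

end Color

end ColProof
namespace ColProof

open List Sum

section Main

variable {lam : Type} [Infinite lam] {A : lam → Set (List lam)}

def Rpat (P Q : lam → Set (List lam)) (p : Finset (List lam × List lam))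
    (x : AttachCar lam A (colorSet P)) (y : AttachCar lam A (colorSet Q)) : Prop :=
  (∃ η ν, (η, ν) ∈ p ∧ x.1 = inl η ∧ y.1 = inl ν) ∨
  (∃ η ν, (η, ν) ∈ p ∧ x.1 = inr (η, inl ()) ∧ y.1 = inr (ν, inl ())) ∨
  (∃ η ν j s, (η, ν) ∈ p ∧ x.1 = inr (η, inr (j, s)) ∧ y.1 = inr (ν, inr (j, s)))

lemma Rpat_mono {P Q : lam → Set (List lam)} {p p' : Finset (List lam × List lam)}
    (h : p ⊆ p') {x : AttachCar lam A (colorSet P)} {y : AttachCar lam A (colorSet Q)}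
    (hr : Rpat P Q p x y) : Rpat P Q p' x y := by
  rcases hr with ⟨η, ν, h1, h2, h3⟩ | ⟨η, ν, h1, h2, h3⟩ | ⟨η, ν, j, s, h1, h2, h3⟩
  · exact Or.inl ⟨η, ν, h h1, h2, h3⟩
  · exact Or.inr (Or.inl ⟨η, ν, h h1, h2, h3⟩)
  · exact Or.inr (Or.inr ⟨η, ν, j, s, h h1, h2, h3⟩)

lemma base_ex {V : List lam → Set lam} (x : AttachCar lam A V) :
    ∃ η, x.1 = inl η ∨ ∃ z, x.1 = inr (η, z) := by
  rcases hx : x.1 with η | ⟨η, z⟩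
  · exact ⟨η, Or.inl rfl⟩
  · exact ⟨η, Or.inr ⟨z, rfl⟩⟩

lemma partner_right {P Q : lam → Set (List lam)} {p : Finset (List lam × List lam)}
    (hcol : ∀ x y, (x, y) ∈ p → ∀ j, x ∈ P j ↔ y ∈ Q j)
    {η ν : List lam} (hmem : (η, ν) ∈ p) (x : AttachCar lam A (colorSet P))
    (hx : x.1 = inl η ∨ ∃ z, x.1 = inr (η, z)) :
    ∃ y : AttachCar lam A (colorSet Q), Rpat P Q p x y := by
  rcases hx with hx | ⟨z, hx⟩
  · exact ⟨mkInl ν, Or.inl ⟨η, ν, hmem, hx, rfl⟩⟩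
  · rcases z with u | ⟨j, s⟩
    · cases u; exact ⟨mkLeaf ν, Or.inr (Or.inl ⟨η, ν, hmem, hx, rfl⟩)⟩
    · obtain ⟨hjP, hsA⟩ := x.2 η j s hx
      have hjQ : j ∈ colorSet Q ν := (hcol η ν hmem j).1 hjP
      exact ⟨mkNode ν j s hjQ hsA, Or.inr (Or.inr ⟨η, ν, j, s, hmem, hx, rfl⟩)⟩

lemma partner_left {P Q : lam → Set (List lam)} {p : Finset (List lam × List lam)}
    (hcol : ∀ x y, (x, y) ∈ p → ∀ j, x ∈ P j ↔ y ∈ Q j)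
    {η ν : List lam} (hmem : (η, ν) ∈ p) (y : AttachCar lam A (colorSet Q))
    (hy : y.1 = inl ν ∨ ∃ z, y.1 = inr (ν, z)) :
    ∃ x : AttachCar lam A (colorSet P), Rpat P Q p x y := by
  rcases hy with hy | ⟨z, hy⟩
  · exact ⟨mkInl η, Or.inl ⟨η, ν, hmem, rfl, hy⟩⟩
  · rcases z with u | ⟨j, s⟩
    · cases u; exact ⟨mkLeaf η, Or.inr (Or.inl ⟨η, ν, hmem, rfl, hy⟩)⟩
    · obtain ⟨hjQ, hsA⟩ := y.2 ν j s hy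
      have hjP : j ∈ colorSet P η := (hcol η ν hmem j).2 hjQ
      exact ⟨mkNode η j s hjP hsA, Or.inr (Or.inr ⟨η, ν, j, s, hmem, rfl, hy⟩)⟩

lemma part2fwd {P Q : lam → Set (List lam)} (h : ColBackForth P Q) :
    BackForth (relA A (colorSet P)) (relA A (colorSet Q)) := by
  classical
  obtain ⟨F, ⟨p₀, hp₀⟩, hFiso, hFext⟩ := h
  refine ⟨{q | ∃ p ∈ F, ∀ u ∈ q, Rpat P Q p u.1 u.2}, ⟨∅, p₀, hp₀, by simp⟩, ?_, ?_⟩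
  · rintro q ⟨p, hpF, hq⟩
    obtain ⟨hf, hinj, hpre, hcol⟩ := hFiso p hpF
    have hiffeq : ∀ η ν η' ν', (η, ν) ∈ p → (η', ν') ∈ p → (η = η' ↔ ν = ν') := by
      intro η ν η' ν' h1 h2
      constructor
      · rintro rfl; exact hf _ _ _ h1 h2
      · rintro rfl; exact hinj _ _ _ h1 h2
    refine ⟨?_, ?_, ?_⟩
    · intro x y y' hxy hxy'
      have r1 := hq _ hxy
      have r2 := hq _ hxy'
      apply Subtype.ext
      rcases r1 with ⟨η, ν, h1, hx1, hy1⟩ | ⟨η, ν, h1, hx1, hy1⟩ | ⟨η, ν, j, s, h1, hx1, hy1⟩ <;>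
        rcases r2 with ⟨η', ν', h2, hx2, hy2⟩ | ⟨η', ν', h2, hx2, hy2⟩ | ⟨η', ν', j', s', h2, hx2, hy2⟩ <;>
        rw [hx1] at hx2 <;>
        simp only [inl.injEq, inr.injEq, Prod.mk.injEq, and_true, and_false, false_and, reduceCtorEq] at hx2
      · obtain rfl := hx2; obtain rfl := hf _ _ _ h1 h2; rw [hy1, hy2]
      · obtain rfl := hx2; obtain rfl := hf _ _ _ h1 h2; rw [hy1, hy2]
      · obtain ⟨rfl, rfl, rfl⟩ := hx2; obtain rfl := hf _ _ _ h1 h2; rw [hy1, hy2]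
    · intro x x' y hxy hx'y
      have r1 := hq _ hxy
      have r2 := hq _ hx'y
      apply Subtype.ext
      rcases r1 with ⟨η, ν, h1, hx1, hy1⟩ | ⟨η, ν, h1, hx1, hy1⟩ | ⟨η, ν, j, s, h1, hx1, hy1⟩ <;>
        rcases r2 with ⟨η', ν', h2, hx2, hy2⟩ | ⟨η', ν', h2, hx2, hy2⟩ | ⟨η', ν', j', s', h2, hx2, hy2⟩ <;>
        rw [hy1] at hy2 <;>
        simp only [inl.injEq, inr.injEq, Prod.mk.injEq, and_true, and_false, false_and, reduceCtorEq] at hy2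
      · obtain rfl := hy2; obtain rfl := hinj _ _ _ h1 h2; rw [hx1, hx2]
      · obtain rfl := hy2; obtain rfl := hinj _ _ _ h1 h2; rw [hx1, hx2]
      · obtain ⟨rfl, rfl, rfl⟩ := hy2; obtain rfl := hinj _ _ _ h1 h2; rw [hx1, hx2]
    · intro x y x' y' hxy hx'y'
      have r1 := hq _ hxy
      have r2 := hq _ hx'y'
      show AttachLe x.1 x'.1 ↔ AttachLe y.1 y'.1
      rcases r1 with ⟨η, ν, h1, hx1, hy1⟩ | ⟨η, ν, h1, hx1, hy1⟩ | ⟨η, ν, j, s, h1, hx1, hy1⟩ <;>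
        rcases r2 with ⟨η', ν', h2, hx2, hy2⟩ | ⟨η', ν', h2, hx2, hy2⟩ | ⟨η', ν', j', s', h2, hx2, hy2⟩ <;>
        rw [hx1, hx2, hy1, hy2]
      · rw [le_inl_inl, le_inl_inl]; exact hpre _ _ _ _ h1 h2
      · rw [le_inl_inr, le_inl_inr]; exact hpre _ _ _ _ h1 h2
      · rw [le_inl_inr, le_inl_inr]; exact hpre _ _ _ _ h1 h2
      · exact iff_of_false not_le_inr_inl not_le_inr_inl
      · rw [le_leaf, le_leaf]
        simp only [inr.injEq, Prod.mk.injEq, and_true]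
        exact hiffeq _ _ _ _ h2 h1
      · rw [le_leaf, le_leaf]; simp
      · exact iff_of_false not_le_inr_inl not_le_inr_inl
      · rw [le_node, le_node]; simp
      · rw [le_node_node, le_node_node]
        constructor
        · rintro ⟨he, hj, hs⟩; exact ⟨(hiffeq _ _ _ _ h1 h2).1 he, hj, hs⟩
        · rintro ⟨he, hj, hs⟩; exact ⟨(hiffeq _ _ _ _ h1 h2).2 he, hj, hs⟩
  · rintro q ⟨p, hpF, hq⟩ a b
    obtain ⟨ηa, hηa⟩ := base_ex a
    obtain ⟨νb, hνb⟩ := base_ex b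
    obtain ⟨p', hp'F, hpp', ⟨νa, hνa⟩, ⟨ηb, hηb⟩⟩ := hFext p hpF ηa νb
    obtain ⟨hf', hinj', hpre', hcol'⟩ := hFiso p' hp'F
    obtain ⟨pa, hpa⟩ := partner_right hcol' hνa a hηa
    obtain ⟨pb, hpb⟩ := partner_left hcol' hηb b hνb
    refine ⟨q ∪ {(a, pa), (pb, b)}, ⟨p', hp'F, ?_⟩, Finset.subset_union_left,
      ⟨pa, by simp⟩, ⟨pb, by simp⟩⟩
    rintro u hu
    rcases Finset.mem_union.1 hu with hu | hu
    · exact Rpat_mono hpp' (hq _ hu)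
    · rcases Finset.mem_insert.1 hu with rfl | hu
      · exact hpa
      · rw [Finset.mem_singleton] at hu; subst hu; exact hpb

lemma part2bwd (hA : ∀ i, IsSubtree (A i) ∧ IsSpecial (A i))
    (hApair : ∀ i j, i ≠ j →
      ¬ BackForth (fun a b : {l : List lam // l ∈ A i} => a.1 <+: b.1)
          (fun a b : {l : List lam // l ∈ A j} => a.1 <+: b.1))
    {P Q : lam → Set (List lam)}
    (h : BackForth (relA A (colorSet P)) (relA A (colorSet Q))) :
    ColBackForth P Q := by
  classical
  obtain ⟨G, ⟨p₀, hp₀⟩, hGiso, hGext⟩ := h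
  have hIso : Iso (relA A (colorSet P)) (relA A (colorSet Q)) G := hGiso
  have hExt : Ext G := hGext
  refine ⟨{r | ∃ q ∈ G, ∀ u ∈ r,
    ((mkInl u.1 : AttachCar lam A (colorSet P)),
     (mkInl u.2 : AttachCar lam A (colorSet Q))) ∈ q},
    ⟨∅, p₀, hp₀, by simp⟩, ?_, ?_⟩
  · rintro r ⟨q, hqG, hr⟩
    refine ⟨?_, ?_, ?_, ?_⟩
    · intro x y y' hxy hxy'
      have h3 := (hIso q hqG).1 _ _ _ (hr (x, y) hxy) (hr (x, y') hxy')
      have h4 := congrArg Subtype.val h3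
      simpa [mkInl] using h4
    · intro x x' y hxy hx'y
      have h3 := (hIso q hqG).2.1 _ _ _ (hr (x, y) hxy) (hr (x', y) hx'y)
      have h4 := congrArg Subtype.val h3
      simpa [mkInl] using h4
    · intro x y x' y' hxy hx'y'
      have h3 := (hIso q hqG).2.2 _ _ _ _ (hr (x, y) hxy) (hr (x', y') hx'y')
      constructor
      · intro hp; exact le_inl_inl.1 (h3.1 (le_inl_inl.2 hp))
      · intro hp; exact le_inl_inl.1 (h3.2 (le_inl_inl.2 hp))
    · intro x y hxy jj
      constructor
      · intro hx
        exact color_main hA hApair hIso hExt hqG (hr (x, y) hxy) hx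
      · intro hy
        exact color_main hA hApair (iso_swap hIso) (ext_swap hExt) (Fswap_mem hqG)
          (mem_pswap.2 (hr (x, y) hxy)) hy
  · rintro r ⟨q, hqG, hr⟩ aL bL
    obtain ⟨q', hq'G, hqq', ⟨b1, hb1⟩, ⟨a1, ha1⟩⟩ := hGext q hqG (mkInl aL) (mkInl bL)
    have hphi1 : Phi (relA A (colorSet Q)) b1 :=
      transfer_phi hIso hExt hq'G hb1 (phi_inl aL)
    obtain ⟨ρb, hρb⟩ := (phi_iff_inl hA b1).1 hphi1
    have hphi2 : Phi (relA A (colorSet P)) a1 :=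
      transfer_phi (iso_swap hIso) (ext_swap hExt) (Fswap_mem hq'G)
        (mem_pswap.2 ha1) (phi_inl bL)
    obtain ⟨ρa, hρa⟩ := (phi_iff_inl hA a1).1 hphi2
    refine ⟨r ∪ {(aL, ρb), (ρa, bL)}, ⟨q', hq'G, ?_⟩, Finset.subset_union_left,
      ⟨ρb, by simp⟩, ⟨ρa, by simp⟩⟩
    rintro u hu
    rcases Finset.mem_union.1 hu with hu | hu
    · exact hqq' (hr _ hu)
    · rcases Finset.mem_insert.1 hu with rfl | hu
      · have he : b1 = mkInl ρb := Subtype.ext hρb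
        rw [← he]; exact hb1
      · rw [Finset.mem_singleton] at hu; subst hu
        have he : a1 = mkInl ρa := Subtype.ext hρa
        rw [← he]; exact ha1

end Main

end ColProof

/-- given a family `(A_i)_{i<λ}` of pairwise non-back-and-forth-
equivalent special subtrees of `λ^{<ω}`, the map sending a `λ`-colored tree
`M = (λ^{<ω}, ⊴, (P_j)_{j<λ})` to the attached tree `f(M) = T₀*(S_{V_M(η)} : η ∈ T₀)`
satisfies: (i) `f(M)` is isomorphic (as a partial order) to a subtree of `λ^{<ω}`;
and (ii) `M ≡∞ℵ₀ N` iff `f(M) ≡∞ℵ₀ f(N)` (as orders alone). -/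
theorem colored_to_subtree (lam : Type) [Infinite lam]
    (A : lam → Set (List lam))
    (hA : ∀ i, IsSubtree (A i) ∧ IsSpecial (A i))
    (hApair : ∀ i j, i ≠ j →
      ¬ BackForth (fun a b : {l : List lam // l ∈ A i} => a.1 <+: b.1)
          (fun a b : {l : List lam // l ∈ A j} => a.1 <+: b.1)) :
    (∀ P : lam → Set (List lam),
      ∃ T : Set (List lam), IsSubtree T ∧
        ∃ e : AttachCar lam A (colorSet P) ≃ {l : List lam // l ∈ T},
          ∀ x y : AttachCar lam A (colorSet P),
            AttachLe x.1 y.1 ↔ (e x).1 <+: (e y).1) ∧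
    (∀ P Q : lam → Set (List lam),
      ColBackForth P Q ↔
        BackForth (fun x y : AttachCar lam A (colorSet P) => AttachLe x.1 y.1)
          (fun x y : AttachCar lam A (colorSet Q) => AttachLe x.1 y.1)) := by
  constructor
  · intro P
    exact ColProof.part1 A (fun i => (hA i).1) (colorSet P)
  · intro P Q
    constructor
    · intro h
      exact ColProof.part2fwd h
    · intro h
      exact ColProof.part2bwd hA hApair h
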